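/- Let f : [1, ∞) → [0, ∞) be locally integrable with ∫_1^∞ f(s) ds < ∞, and suppose there exist constants C ≥ 1 and β ∈ (1/2, 1) such that for every T ≥ 2, ∫_T^∞ f(s) ds ≤ C ( ∫_{T−1}^{T+1} f(s) ds )^β. Then √f is integrable on [2, ∞) and there exist constants α > 0 and C′ > 0 such that ∫_t^∞ √(f(s)) ds ≤ C′ t^{−α} for every t ≥ 2. -/

import Mathlib

open MeasureTheory Set

lemma sqrt_le_half_add {x ε : ℝ} (hx : 0 ≤ x) (hε : 0 < ε) :
    Real.sqrt x ≤ (ε + x / ε) / 2 := by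
  have h1 : Real.sqrt x ≤ (ε ^ 2 + x) / (2 * ε) := by
    rw [le_div_iff₀ (by positivity)]
    nlinarith [sq_nonneg (Real.sqrt x - ε), Real.sq_sqrt hx]
  have h2 : (ε ^ 2 + x) / (2 * ε) = (ε + x / ε) / 2 := by field_simp
  linarith [h1, h2.le]

lemma bernoulli_neg {h : ℝ} (hh0 : 0 < h) (hh1 : h < 1) {a b : ℝ}
    (hb : 0 < b) (hba : b ≤ a) :
    a ^ (-h) + h * a ^ (-h - 1) * (a - b) ≤ b ^ (-h) := by
  have ha : 0 < a := lt_of_lt_of_le hb hba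
  set s : ℝ := b / a - 1 with hs
  have hs1 : -1 < s := by
    have : 0 < b / a := div_pos hb ha
    simp only [hs]; linarith
  have hs0 : s ≤ 0 := by
    have : b / a ≤ 1 := (div_le_one ha).2 hba
    simp only [hs]; linarith
  have hbern : (1 + s) ^ h ≤ 1 + h * s :=
    rpow_one_add_le_one_add_mul_self hs1.le hh0.le hh1.le
  have h1s : (0:ℝ) < 1 + s := by linarith
  have h1hs : (0:ℝ) < 1 + h * s := by nlinarith
  have hpow : (0:ℝ) < (1 + s) ^ h := Real.rpow_pos_of_pos h1s h
  have hinv : 1 - h * s ≤ (1 + s) ^ (-h) := by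
    rw [Real.rpow_neg h1s.le, ← one_div, le_div_iff₀ hpow]
    nlinarith [mul_le_mul_of_nonneg_left hbern (by nlinarith : (0:ℝ) ≤ 1 - h * s), sq_nonneg (h * s)]
  have hab : b = a * (1 + s) := by rw [hs, show (1:ℝ) + (b / a - 1) = b / a by ring, mul_div_assoc', mul_div_cancel_left₀ _ ha.ne']
  have hleft : a ^ (-h) + h * a ^ (-h - 1) * (a - b) = a ^ (-h) * (1 - h * s) := by
    have hm1 : a ^ (-h - 1) = a ^ (-h) * a⁻¹ := by
      rw [show -h - 1 = -h + (-1) by ring, Real.rpow_add ha, Real.rpow_neg_one]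
    rw [hm1, hs]
    field_simp
    ring
  rw [hleft, hab, Real.mul_rpow ha.le h1s.le]
  exact mul_le_mul_of_nonneg_left hinv (Real.rpow_nonneg ha.le _)

lemma discrete_decay {C β : ℝ} (hC : 1 ≤ C) (hβ1 : 1 / 2 < β) (hβ2 : β < 1)
    (a : ℕ → ℝ) (h0 : ∀ n, 0 ≤ a n) (hmono : ∀ n, a (n + 1) ≤ a n)
    (hrec : ∀ n, a (n + 1) ≤ C * (a n - a (n + 1)) ^ β) :
    ∃ K : ℝ, 0 < K ∧ ∀ n : ℕ, 1 ≤ n → a n ≤ K * (n : ℝ) ^ (-(β / (1 - β))) := by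
  have hβ0 : 0 < β := by linarith
  have h1β : 0 < 1 - β := by linarith
  have hC0 : 0 < C := by linarith
  have hanti : Antitone a := antitone_nat_of_succ_le hmono
  set h : ℝ := (1 - β) / β with hhdef
  have hh0 : 0 < h := div_pos h1β hβ0
  have hh1 : h < 1 := by rw [hhdef, div_lt_one hβ0]; linarith
  have hexp : -(β / (1 - β)) = -(1 / h) := by
    rw [hhdef, one_div_div]
  by_cases ha0 : a 0 = 0
  · refine ⟨1, one_pos, fun n hn => ?_⟩
    have hz : a n = 0 := le_antisymm (ha0 ▸ hanti (Nat.zero_le n)) (h0 n)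
    rw [hz]
    positivity
  · have a0pos : 0 < a 0 := (h0 0).lt_of_ne (Ne.symm ha0)
    have h2h : (1:ℝ) < 2 ^ h := by
      rw [show (1:ℝ) = 2 ^ (0:ℝ) by simp]
      exact Real.rpow_lt_rpow_of_exponent_lt one_lt_two hh0
    set c : ℝ := min ((2 ^ h - 1) * a 0 ^ (-h)) (h * (2 * C) ^ (-(1 / β))) with hcdef
    have hc : 0 < c := by
      apply lt_min
      · exact mul_pos (by linarith) (Real.rpow_pos_of_pos a0pos _)
      · exact mul_pos hh0 (Real.rpow_pos_of_pos (by linarith) _)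
    have key : ∀ k, 0 < a (k + 1) → a k ^ (-h) + c ≤ a (k + 1) ^ (-h) := by
      intro k hk1
      have hk0 : 0 < a k := lt_of_lt_of_le hk1 (hmono k)
      by_cases hcase : a (k + 1) ≤ a k / 2
      · have e1 : (a k / 2) ^ (-h) ≤ a (k + 1) ^ (-h) :=
          Real.rpow_le_rpow_of_nonpos hk1 hcase (neg_nonpos.2 hh0.le)
        have e2 : (a k / 2) ^ (-h) = 2 ^ h * a k ^ (-h) := by
          rw [Real.div_rpow hk0.le (by norm_num), Real.rpow_neg (by norm_num : (0:ℝ) ≤ 2)]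
          field_simp
        have e3 : a k ^ (-h) ≥ a 0 ^ (-h) :=
          Real.rpow_le_rpow_of_nonpos hk0 (hanti (Nat.zero_le k)) (neg_nonpos.2 hh0.le)
        have e4 : c ≤ (2 ^ h - 1) * a k ^ (-h) := by
          refine le_trans (min_le_left _ _) ?_
          exact mul_le_mul_of_nonneg_left e3 (by linarith)
        nlinarith [e1, e2, e4]
      · push_neg at hcase
        have hdnn : 0 ≤ a k - a (k + 1) := by linarith [hmono k]
        have hd : (a (k + 1) / C) ^ (1 / β) ≤ a k - a (k + 1) := by
          have h1 : a (k + 1) / C ≤ (a k - a (k + 1)) ^ β := by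
            rw [div_le_iff₀ hC0]
            linarith [hrec k]
          have h2 := Real.rpow_le_rpow (by positivity) h1 (by positivity : (0:ℝ) ≤ 1 / β)
          rwa [← Real.rpow_mul hdnn, mul_one_div, div_self hβ0.ne', Real.rpow_one] at h2
        have hd2 : (a k / 2 / C) ^ (1 / β) ≤ (a (k + 1) / C) ^ (1 / β) := by
          apply Real.rpow_le_rpow (by positivity) _ (by positivity)
          gcongr
        have e5 : h * a k ^ (-h - 1) * (a k / 2 / C) ^ (1 / β) = h * (2 * C) ^ (-(1 / β)) := by
          have hre : a k / 2 / C = a k / (2 * C) := by ring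
          have epow : a k ^ (-h - 1) * a k ^ (1 / β) = 1 := by
            rw [← Real.rpow_add hk0]
            have hz : -h - 1 + 1 / β = 0 := by rw [hhdef]; field_simp; ring
            rw [hz, Real.rpow_zero]
          rw [hre, Real.div_rpow hk0.le (by positivity), Real.rpow_neg (by positivity)]
          calc h * a k ^ (-h - 1) * (a k ^ (1 / β) / (2 * C) ^ (1 / β))
              = h * (a k ^ (-h - 1) * a k ^ (1 / β)) * ((2 * C) ^ (1 / β))⁻¹ := by ring
            _ = h * ((2 * C) ^ (1 / β))⁻¹ := by rw [epow, mul_one]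
        have hbern := bernoulli_neg hh0 hh1 hk1 (hmono k)
        have e6 : c ≤ h * a k ^ (-h - 1) * (a k - a (k + 1)) := by
          calc c ≤ h * (2 * C) ^ (-(1 / β)) := min_le_right _ _
            _ = h * a k ^ (-h - 1) * (a k / 2 / C) ^ (1 / β) := e5.symm
            _ ≤ h * a k ^ (-h - 1) * (a (k + 1) / C) ^ (1 / β) := by
                apply mul_le_mul_of_nonneg_left hd2
                positivity
            _ ≤ h * a k ^ (-h - 1) * (a k - a (k + 1)) := by
                apply mul_le_mul_of_nonneg_left hd
                positivity
        linarith
    have main : ∀ n : ℕ, 0 < a n → c * n ≤ a n ^ (-h) := by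
      intro n
      induction n with
      | zero => intro _; simp; positivity
      | succ n ih =>
        intro pos
        have posn : 0 < a n := lt_of_lt_of_le pos (hmono n)
        have hk := key n pos
        have : c * ((n : ℝ) + 1) = c * n + c := by ring
        push_cast
        linarith [ih posn]
    refine ⟨c ^ (-(1 / h)), Real.rpow_pos_of_pos hc _, fun n hn => ?_⟩
    rcases (h0 n).lt_or_eq with pos | hz
    · have hn0 : (0:ℝ) < n := by exact_mod_cast hn
      have hcn : 0 < c * n := mul_pos hc hn0
      have h1 := main n pos
      have h2 : (a n ^ (-h)) ^ (-(1 / h)) ≤ (c * n) ^ (-(1 / h)) :=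
        Real.rpow_le_rpow_of_nonpos hcn h1 (neg_nonpos.2 (by positivity))
      have h3 : (a n ^ (-h)) ^ (-(1 / h)) = a n := by
        rw [← Real.rpow_mul pos.le]
        have hone : -h * -(1 / h) = 1 := by field_simp
        rw [hone, Real.rpow_one]
      have h4 : (c * n) ^ (-(1 / h)) = c ^ (-(1 / h)) * (n : ℝ) ^ (-(1 / h)) :=
        Real.mul_rpow hc.le (Nat.cast_nonneg n)
      rw [hexp]
      rw [h3, h4] at h2
      exact h2
    · rw [hexp, ← hz]
      have hn0 : (0:ℝ) < n := by exact_mod_cast hn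
      positivity


set_option maxHeartbeats 1000000 in
/-- an integral difference inequality with exponent `β ∈ (1/2, 1)` for the
tails of a nonnegative integrable function forces polynomial decay of `∫_t^∞ √f`. -/
theorem tail_inequality_gives_polynomial_decay
    (f : ℝ → ℝ) (hf0 : ∀ s, 1 ≤ s → 0 ≤ f s)
    (hloc : LocallyIntegrableOn f (Ici 1))
    (hint : IntegrableOn f (Ici 1))
    (C β : ℝ) (hC : 1 ≤ C) (hβ1 : 1 / 2 < β) (hβ2 : β < 1)
    (hrec : ∀ T : ℝ, 2 ≤ T →
      (∫ s in Ici T, f s) ≤ C * (∫ s in Icc (T - 1) (T + 1), f s) ^ β) :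
    IntegrableOn (fun s => Real.sqrt (f s)) (Ici 2) ∧
      ∃ α : ℝ, 0 < α ∧ ∃ C' : ℝ, 0 < C' ∧ ∀ t : ℝ, 2 ≤ t →
        (∫ s in Ici t, Real.sqrt (f s)) ≤ C' * t ^ (-α) := by
  have hβ0 : 0 < β := by linarith
  set G : ℝ → ℝ := fun T => ∫ s in Ici T, f s with hG
  set γ : ℝ := β / (1 - β) with hγ
  have hγ1 : 1 < γ := by
    rw [hγ, lt_div_iff₀ (by linarith)]; linarith
  set r : ℝ := (γ - 1) / 2 with hr
  have hr0 : 0 < r := by rw [hr]; linarith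
  -- basic facts about G
  have hintT : ∀ T : ℝ, 1 ≤ T → IntegrableOn f (Ici T) := fun T hT =>
    hint.mono_set (Ici_subset_Ici.2 hT)
  have hfae : ∀ T : ℝ, 1 ≤ T → 0 ≤ᵐ[volume.restrict (Ici T)] f := by
    intro T hT
    filter_upwards [ae_restrict_mem measurableSet_Ici] with s hs
    exact hf0 s (le_trans hT hs)
  have hGnn : ∀ T : ℝ, 1 ≤ T → 0 ≤ G T := fun T hT =>
    setIntegral_nonneg measurableSet_Ici fun s hs => hf0 s (le_trans hT hs)
  have hGmono : ∀ a b : ℝ, 1 ≤ a → a ≤ b → G b ≤ G a := by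
    intro a b ha hab
    exact setIntegral_mono_set (hintT a ha) (hfae a ha)
      (HasSubset.Subset.eventuallyLE (Ici_subset_Ici.2 hab))
  have hsplit : ∀ a b : ℝ, 1 ≤ a → a ≤ b →
      G a = (∫ s in Ico a b, f s) + G b := by
    intro a b ha hab
    have hdisj : Disjoint (Ico a b) (Ici b) :=
      disjoint_left.mpr fun x hx hx' => absurd hx.2 (not_lt.2 hx')
    have := setIntegral_union (μ := volume) (f := f) hdisj measurableSet_Ici
      (hint.mono_set (fun x hx => le_trans ha hx.1 : Ico a b ⊆ Ici 1))
      (hintT b (le_trans ha hab))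
    rw [hG]
    simp only
    rw [← Ico_union_Ici_eq_Ici hab, this]
  -- the tail recursion for G
  have hGrec : ∀ T : ℝ, 2 ≤ T → G T ≤ C * (G (T - 1) - G (T + 1)) ^ β := by
    intro T hT
    have h1 : (1:ℝ) ≤ T - 1 := by linarith
    have h2 : T - 1 ≤ T + 1 := by linarith
    have hIcc : (∫ s in Icc (T - 1) (T + 1), f s) = G (T - 1) - G (T + 1) := by
      rw [integral_Icc_eq_integral_Ico, hsplit (T - 1) (T + 1) h1 h2]
      ring
    have := hrec T hT
    rwa [hIcc] at this
  -- the discrete sequence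
  set a : ℕ → ℝ := fun n => G (2 * (n : ℝ) + 2) with ha
  have han : ∀ n : ℕ, (1:ℝ) ≤ 2 * (n : ℝ) + 2 := by
    intro n; have : (0:ℝ) ≤ n := Nat.cast_nonneg n; linarith
  have h0 : ∀ n, 0 ≤ a n := fun n => hGnn _ (han n)
  have hamono : ∀ n, a (n + 1) ≤ a n := by
    intro n
    apply hGmono _ _ (han n)
    push_cast; linarith
  have harec : ∀ n, a (n + 1) ≤ C * (a n - a (n + 1)) ^ β := by
    intro n
    have h1 : a (n + 1) ≤ G (2 * (n : ℝ) + 3) := by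
      apply hGmono _ _ (by linarith [Nat.cast_nonneg (α := ℝ) n])
      push_cast; linarith
    have h2 := hGrec (2 * (n : ℝ) + 3) (by linarith [Nat.cast_nonneg (α := ℝ) n])
    have e1 : 2 * (n : ℝ) + 3 - 1 = 2 * (n : ℝ) + 2 := by ring
    have e2 : 2 * (n : ℝ) + 3 + 1 = 2 * ((n : ℝ) + 1) + 2 := by ring
    rw [e1, e2] at h2
    have e3 : a (n + 1) = G (2 * ((n : ℝ) + 1) + 2) := by rw [ha]; push_cast; ring_nf
    calc a (n + 1) ≤ G (2 * (n : ℝ) + 3) := h1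
      _ ≤ C * (G (2 * (n:ℝ) + 2) - G (2 * ((n:ℝ) + 1) + 2)) ^ β := h2
      _ = C * (a n - a (n + 1)) ^ β := by rw [ha, ← e3]
  obtain ⟨K, hK, hdecay⟩ := discrete_decay hC hβ1 hβ2 a h0 hamono harec
  -- decay of G
  have hGdecay : ∃ K₂ : ℝ, 0 < K₂ ∧ ∀ t : ℝ, 2 ≤ t → G t ≤ K₂ * t ^ (-γ) := by
    have hg1 : 0 ≤ G 1 := hGnn 1 le_rfl
    refine ⟨(K + G 1 + 1) * 6 ^ γ, by have h6p : (0:ℝ) < 6 ^ γ := by positivity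
                                      nlinarith, fun t ht => ?_⟩
    have ht0 : (0:ℝ) < t := by linarith
    rcases le_or_gt 6 t with h6 | h6
    · set n : ℕ := ⌊t / 2⌋₊ - 1 with hn
      have hfl : 3 ≤ ⌊t / 2⌋₊ := Nat.le_floor (by push_cast; linarith)
      have hn1 : 1 ≤ n := by omega
      have hcast : (n : ℝ) = (⌊t / 2⌋₊ : ℝ) - 1 := by
        rw [hn]; push_cast [Nat.cast_sub (by omega : 1 ≤ ⌊t / 2⌋₊)]; ring
      have hnt : (n : ℝ) ≥ t / 6 := by
        have h1 : (⌊t / 2⌋₊ : ℝ) ≥ t / 2 - 1 := by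
          have := Nat.lt_floor_add_one (t / 2)
          linarith [this]
        rw [hcast]; linarith
      have hle : 2 * (n : ℝ) + 2 ≤ t := by
        have h2 : (⌊t / 2⌋₊ : ℝ) ≤ t / 2 := Nat.floor_le (by linarith)
        rw [hcast]; linarith
      have hGt : G t ≤ a n := hGmono _ _ (han n) hle
      have hKn := hdecay n hn1
      have hmon : (n:ℝ) ^ (-γ) ≤ (t / 6) ^ (-γ) := by
        apply Real.rpow_le_rpow_of_nonpos (by linarith) hnt (by linarith)
      have hdiv : (t / 6) ^ (-γ) = 6 ^ γ * t ^ (-γ) := by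
        rw [Real.div_rpow ht0.le (by norm_num), Real.rpow_neg (by norm_num : (0:ℝ) ≤ 6)]
        field_simp
      have : G t ≤ K * (6 ^ γ * t ^ (-γ)) := by
        calc G t ≤ a n := hGt
          _ ≤ K * (n:ℝ) ^ (-γ) := hKn
          _ ≤ K * (t / 6) ^ (-γ) := mul_le_mul_of_nonneg_left hmon hK.le
          _ = K * (6 ^ γ * t ^ (-γ)) := by rw [hdiv]
      calc G t ≤ K * (6 ^ γ * t ^ (-γ)) := this
        _ ≤ (K + G 1 + 1) * (6 ^ γ * t ^ (-γ)) :=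
            mul_le_mul_of_nonneg_right (by linarith) (by positivity)
        _ = (K + G 1 + 1) * 6 ^ γ * t ^ (-γ) := by ring
    · have hG1 : G t ≤ G 1 := hGmono 1 t le_rfl (by linarith)
      have hpow : 6 ^ (-γ) ≤ t ^ (-γ) :=
        Real.rpow_le_rpow_of_nonpos ht0 h6.le (by linarith)
      have h6γ : (6:ℝ) ^ γ * 6 ^ (-γ) = 1 := by
        rw [← Real.rpow_add (by norm_num)]; simp
      have h1 : (K + G 1 + 1) * 6 ^ γ * 6 ^ (-γ) ≤ (K + G 1 + 1) * 6 ^ γ * t ^ (-γ) := by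
        apply mul_le_mul_of_nonneg_left hpow
        have h6p : (0:ℝ) < 6 ^ γ := by positivity
        nlinarith
      have h2 : (K + G 1 + 1) * 6 ^ γ * 6 ^ (-γ) = K + G 1 + 1 := by
        rw [mul_assoc, h6γ, mul_one]
      linarith
  obtain ⟨K₂, hK₂, hGdec⟩ := hGdecay
  -- measurability and local integrability of sqrt f
  have hsm : AEStronglyMeasurable (fun s => Real.sqrt (f s)) (volume.restrict (Ici 1)) :=
    Real.continuous_sqrt.comp_aestronglyMeasurable hint.aestronglyMeasurable
  have hsqint : ∀ u v : ℝ, 1 ≤ u → IntegrableOn (fun s => Real.sqrt (f s)) (Ioc u v) := by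
    intro u v hu1
    have hsub : Ioc u v ⊆ Ici 1 := fun x hx => le_trans hu1 hx.1.le
    have hg : IntegrableOn (fun s => (1 + f s) / 2) (Ioc u v) :=
      ((integrableOn_const measure_Ioc_lt_top.ne).add (hint.mono_set hsub)).div_const 2
    apply hg.mono'
    · exact hsm.mono_measure (Measure.restrict_mono hsub le_rfl)
    · filter_upwards [ae_restrict_mem measurableSet_Ioc] with s hs
      have hfs : 0 ≤ f s := hf0 s (hsub hs)
      rw [Real.norm_eq_abs, abs_of_nonneg (Real.sqrt_nonneg _)]
      have := sqrt_le_half_add hfs one_pos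
      simpa using this
  set q : ℝ := 2 ^ (-r) with hq
  have hq0 : 0 < q := Real.rpow_pos_of_pos two_pos _
  have hq1 : q < 1 := Real.rpow_lt_one_of_one_lt_of_neg one_lt_two (by linarith)
  set B : ℝ := (1 - q)⁻¹ with hB
  have hB0 : 0 < B := inv_pos.2 (by linarith)
  set SK : ℝ := Real.sqrt K₂ with hSK
  have hSK0 : 0 < SK := Real.sqrt_pos.2 hK₂
  -- the dyadic block bound
  have hblock : ∀ u : ℝ, 2 ≤ u →
      (∫ s in Ioc u (2 * u), Real.sqrt (f s)) ≤ SK * u ^ (-r) := by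
    intro u hu2
    have hu0 : 0 < u := by linarith
    have hu1 : (1:ℝ) ≤ u := by linarith
    set ε : ℝ := SK * u ^ (-(γ + 1) / 2) with hε
    have hε0 : 0 < ε := mul_pos hSK0 (Real.rpow_pos_of_pos hu0 _)
    have hsub : Ioc u (2 * u) ⊆ Ici 1 := fun x hx => le_trans hu1 hx.1.le
    have hgint : IntegrableOn (fun s => (ε + f s / ε) / 2) (Ioc u (2 * u)) :=
      ((integrableOn_const measure_Ioc_lt_top.ne).add
        ((hint.mono_set hsub).div_const ε)).div_const 2
    have h1 : (∫ s in Ioc u (2 * u), Real.sqrt (f s)) ≤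
        ∫ s in Ioc u (2 * u), (ε + f s / ε) / 2 := by
      apply setIntegral_mono_on (hsqint u (2 * u) hu1) hgint measurableSet_Ioc
      intro s hs
      exact sqrt_le_half_add (hf0 s (hsub hs)) hε0
    have h2 : (∫ s in Ioc u (2 * u), (ε + f s / ε) / 2) =
        (u * ε + (∫ s in Ioc u (2 * u), f s) / ε) / 2 := by
      rw [integral_div, integral_add (integrableOn_const (C := ε) measure_Ioc_lt_top.ne)
        ((hint.mono_set hsub).div_const ε), setIntegral_const, integral_div,
        measureReal_def, Real.volume_Ioc, ENNReal.toReal_ofReal (by linarith), smul_eq_mul]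
      ring_nf
    have h3 : (∫ s in Ioc u (2 * u), f s) ≤ K₂ * u ^ (-γ) := by
      refine le_trans ?_ (hGdec u hu2)
      exact setIntegral_mono_set (hintT u hu1) (hfae u hu1)
        (HasSubset.Subset.eventuallyLE (fun x hx => hx.1.le : Ioc u (2 * u) ⊆ Ici u))
    have e1 : u * ε = SK * u ^ (-r) := by
      rw [hε, show u * (SK * u ^ (-(γ + 1) / 2)) = SK * (u ^ (1:ℝ) * u ^ (-(γ + 1) / 2))
        by rw [Real.rpow_one]; ring, ← Real.rpow_add hu0]
      congr 1
      rw [hr]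
      ring_nf
    have e2 : K₂ * u ^ (-γ) / ε = SK * u ^ (-r) := by
      have hKs : K₂ = SK * SK := (Real.mul_self_sqrt hK₂.le).symm
      rw [hε, hKs]
      rw [div_eq_iff (by positivity : SK * u ^ (-(γ + 1) / 2) ≠ 0)]
      rw [show SK * u ^ (-r) * (SK * u ^ (-(γ + 1) / 2)) =
        SK * SK * (u ^ (-r) * u ^ (-(γ + 1) / 2)) by ring, ← Real.rpow_add hu0]
      congr 1
      rw [hr]
      ring_nf
    calc (∫ s in Ioc u (2 * u), Real.sqrt (f s))
        ≤ (u * ε + (∫ s in Ioc u (2 * u), f s) / ε) / 2 := h2 ▸ h1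
      _ ≤ (u * ε + (K₂ * u ^ (-γ)) / ε) / 2 := by gcongr
      _ = (SK * u ^ (-r) + SK * u ^ (-r)) / 2 := by rw [e1, e2]
      _ = SK * u ^ (-r) := by ring
  -- rewriting block endpoints
  have hqpow : ∀ (tt : ℝ) (m : ℕ), 0 < tt → (tt * 2 ^ m) ^ (-r) = tt ^ (-r) * q ^ m := by
    intro tt m htt
    rw [Real.mul_rpow htt.le (by positivity)]
    congr 1
    rw [hq, ← Real.rpow_natCast (2:ℝ) m, ← Real.rpow_mul (by norm_num),
      ← Real.rpow_natCast ((2:ℝ) ^ (-r)) m, ← Real.rpow_mul (by norm_num)]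
    congr 1
    ring
  -- partial sums over dyadic blocks
  have hpart : ∀ t : ℝ, 2 ≤ t → ∀ m : ℕ,
      (∫ s in Ioc t (t * 2 ^ m), Real.sqrt (f s)) ≤
        SK * t ^ (-r) * ∑ k ∈ Finset.range m, q ^ k := by
    intro t ht m
    have ht0 : 0 < t := by linarith
    induction m with
    | zero =>
      simp [mul_one, Ioc_self]
    | succ m ih =>
      have hpm : (1:ℝ) ≤ 2 ^ m := one_le_pow₀ one_le_two
      have hle1 : t ≤ t * 2 ^ m := le_mul_of_one_le_right ht0.le hpm
      have hle2 : t * 2 ^ m ≤ t * 2 ^ (m + 1) := by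
        have : (2:ℝ) ^ m ≤ 2 ^ (m + 1) := by
          apply pow_le_pow_right₀ one_le_two
          omega
        nlinarith
      have hunion : Ioc t (t * 2 ^ (m + 1)) =
          Ioc t (t * 2 ^ m) ∪ Ioc (t * 2 ^ m) (t * 2 ^ (m + 1)) :=
        (Ioc_union_Ioc_eq_Ioc hle1 hle2).symm
      have h2m : 2 ≤ t * 2 ^ m := le_trans ht hle1
      have hb := hblock (t * 2 ^ m) h2m
      have hend : 2 * (t * 2 ^ m) = t * 2 ^ (m + 1) := by ring
      rw [hend] at hb
      have hqe : (t * 2 ^ m) ^ (-r) = t ^ (-r) * q ^ m := hqpow t m ht0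
      rw [hunion, setIntegral_union (Ioc_disjoint_Ioc_of_le le_rfl) measurableSet_Ioc
        (hsqint _ _ (by linarith)) (hsqint _ _ (by linarith))]
      rw [Finset.sum_range_succ, mul_add]
      have : SK * ((t * 2 ^ m) ^ (-r)) = SK * t ^ (-r) * q ^ m := by rw [hqe]; ring
      linarith [ih, hb, this.le, this.ge]
  have hsum_le : ∀ m : ℕ, (∑ k ∈ Finset.range m, q ^ k) ≤ B := by
    intro m
    refine le_trans ((summable_geometric_of_lt_one hq0.le hq1).sum_le_tsum (Finset.range m)
      (fun i _ => pow_nonneg hq0.le i)) ?_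
    rw [tsum_geometric_of_lt_one hq0.le hq1]
  have hpartB : ∀ t : ℝ, 2 ≤ t → ∀ m : ℕ,
      (∫ s in Ioc t (t * 2 ^ m), Real.sqrt (f s)) ≤ SK * t ^ (-r) * B := by
    intro t ht m
    refine le_trans (hpart t ht m) ?_
    apply mul_le_mul_of_nonneg_left (hsum_le m)
    positivity
  -- integrability on Ici 2
  have hnorm : ∀ x : ℝ, ‖Real.sqrt (f x)‖ = Real.sqrt (f x) := fun x => by
    rw [Real.norm_eq_abs, abs_of_nonneg (Real.sqrt_nonneg _)]
  have hintSqrt : IntegrableOn (fun s => Real.sqrt (f s)) (Ioi 2) := by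
    have hbt : Filter.Tendsto (fun m : ℕ => (2:ℝ) * 2 ^ m) Filter.atTop Filter.atTop :=
      Filter.Tendsto.const_mul_atTop two_pos
        (tendsto_pow_atTop_atTop_of_one_lt one_lt_two)
    apply integrableOn_Ioi_of_intervalIntegral_norm_bounded (SK * 2 ^ (-r) * B) 2
      (fun m : ℕ => hsqint 2 (2 * 2 ^ m) one_le_two) hbt
    · refine Filter.Eventually.of_forall fun m => ?_
      have h2m : (2:ℝ) ≤ 2 * 2 ^ m := by
        nlinarith [one_le_pow₀ (one_le_two (α := ℝ)) (n := m)]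
      rw [intervalIntegral.integral_of_le h2m]
      simp only [hnorm]
      exact hpartB 2 le_rfl m
  have hIci : IntegrableOn (fun s => Real.sqrt (f s)) (Ici 2) := by
    rw [integrableOn_Ici_iff_integrableOn_Ioi]
    exact hintSqrt
  refine ⟨hIci, r, hr0, SK * B, mul_pos hSK0 hB0, fun t ht => ?_⟩
  have ht0 : (0:ℝ) < t := by linarith
  have hU : (⋃ m : ℕ, Ioc t (t * 2 ^ m)) = Ioi t := by
    ext x
    simp only [mem_iUnion, mem_Ioc, mem_Ioi]
    constructor
    · rintro ⟨m, h1, _⟩; exact h1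
    · intro hx
      obtain ⟨m, hm⟩ := pow_unbounded_of_one_lt (x / t) one_lt_two
      refine ⟨m, hx, ?_⟩
      rw [div_lt_iff₀ ht0] at hm
      nlinarith
  have hmonoS : Monotone (fun m : ℕ => Ioc t (t * 2 ^ m)) := by
    intro i j hij
    apply Ioc_subset_Ioc le_rfl
    have : (2:ℝ) ^ i ≤ 2 ^ j := pow_le_pow_right₀ one_le_two hij
    nlinarith
  have htend := tendsto_setIntegral_of_monotone (fun m : ℕ => measurableSet_Ioc) hmonoS
    (by rw [hU]; exact hintSqrt.mono_set (Ioi_subset_Ioi ht))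
  rw [hU] at htend
  have hlim : (∫ s in Ioi t, Real.sqrt (f s)) ≤ SK * t ^ (-r) * B :=
    le_of_tendsto htend (Filter.Eventually.of_forall fun m => hpartB t ht m)
  rw [integral_Ici_eq_integral_Ioi]
  calc (∫ s in Ioi t, Real.sqrt (f s)) ≤ SK * t ^ (-r) * B := hlim
    _ = SK * B * t ^ (-r) := by ring
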